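/- arXiv:1812.03773 — 3 statements merged into one kernel-verified Lean document; each statement's English description precedes it below -/
import Mathlib

section
/- Let x ∈ (ℝ^m)^{|V|} satisfy ‖P_{D^⊥} x‖² ≤ θ_D ‖x‖² with θ_D ∈ (0,1), where D is the diagonal subspace and all components of P_D x equal a ∈ ℝ^m. Then for every i ∈ V: (1 − sqrt(θ_D |V| /(1−θ_D))) ‖a‖ ≤ ‖x_i‖ ≤ (1 + sqrt(θ_D |V|/(1−θ_D))) ‖a‖. -/
noncomputable section

/-- If `Σ_i ‖x_i − a‖² ≤ θ_D Σ_i ‖x_i‖²` where `a` is the average of the `x_i`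
(i.e. `‖P_{D^⊥}x‖² ≤ θ_D‖x‖²` for the diagonal subspace `D`), then each `‖x_i‖` is within
the factor `1 ± sqrt(θ_D|V|/(1−θ_D))` of `‖a‖`. -/
theorem stmt7 {V : Type*} [Fintype V] [Nonempty V] {m : ℕ}
    (x : V → EuclideanSpace ℝ (Fin m)) (θD : ℝ) (hθ : θD ∈ Set.Ioo (0:ℝ) 1)
    (a : EuclideanSpace ℝ (Fin m))
    (ha : a = ((Fintype.card V : ℝ))⁻¹ • ∑ i, x i)
    (h : ∑ i, ‖x i - a‖^2 ≤ θD * ∑ i, ‖x i‖^2) :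
    ∀ i, (1 - Real.sqrt (θD * (Fintype.card V) / (1 - θD))) * ‖a‖ ≤ ‖x i‖ ∧
         ‖x i‖ ≤ (1 + Real.sqrt (θD * (Fintype.card V) / (1 - θD))) * ‖a‖ := by
  obtain ⟨hθ0, hθ1⟩ := hθ
  intro i
  set n : ℝ := (Fintype.card V : ℝ) with hn_def
  have hn : 0 < n := by
    simp only [hn_def]
    exact_mod_cast Fintype.card_pos
  have hsum : ∑ j, x j = n • a := by
    rw [ha, smul_smul, mul_inv_cancel₀ hn.ne', one_smul]
  have key : ∑ j, ‖x j‖^2 = (∑ j, ‖x j - a‖^2) + n * ‖a‖^2 := by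
    have hterm : ∀ j, ‖x j‖^2
        = ‖x j - a‖^2 + 2 * (inner ℝ (x j - a) a : ℝ) + ‖a‖^2 := by
      intro j
      have := norm_add_sq_real (x j - a) a
      simpa using this
    rw [Finset.sum_congr rfl fun j _ => hterm j]
    rw [Finset.sum_add_distrib, Finset.sum_add_distrib]
    have hz : ∑ j, (2 * (inner ℝ (x j - a) a : ℝ)) = 0 := by
      rw [← Finset.mul_sum, ← sum_inner]
      have : ∑ j, (x j - a) = (0 : EuclideanSpace ℝ (Fin m)) := by
        rw [Finset.sum_sub_distrib, hsum, Finset.sum_const, Finset.card_univ,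
          sub_eq_zero]
        simp [hn_def, Nat.cast_smul_eq_nsmul]
      rw [this, inner_zero_left, mul_zero]
    rw [hz, add_zero, Finset.sum_const, Finset.card_univ, nsmul_eq_mul]
  -- bound on distances
  have hdist_sum : (1 - θD) * ∑ j, ‖x j - a‖^2 ≤ θD * n * ‖a‖^2 := by
    rw [key] at h; nlinarith
  have hge : ‖x i - a‖^2 ≤ ∑ j, ‖x j - a‖^2 :=
    Finset.single_le_sum (f := fun j => ‖x j - a‖^2)
      (fun j _ => sq_nonneg _) (Finset.mem_univ i)
  have h1θ : 0 < 1 - θD := by linarith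
  have hdi : ‖x i - a‖^2 ≤ θD * n / (1 - θD) * ‖a‖^2 := by
    rw [div_mul_eq_mul_div, le_div_iff₀ h1θ]
    nlinarith
  set c : ℝ := Real.sqrt (θD * n / (1 - θD)) with hc
  have hc2 : c^2 = θD * n / (1 - θD) :=
    Real.sq_sqrt (by positivity)
  have hcn : 0 ≤ c := Real.sqrt_nonneg _
  have hle : ‖x i - a‖ ≤ c * ‖a‖ := by
    have h2 : ‖x i - a‖^2 ≤ (c * ‖a‖)^2 := by rw [mul_pow, hc2]; linarith
    calc ‖x i - a‖ = Real.sqrt (‖x i - a‖^2) := (Real.sqrt_sq (norm_nonneg _)).symm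
      _ ≤ Real.sqrt ((c * ‖a‖)^2) := Real.sqrt_le_sqrt h2
      _ = c * ‖a‖ := Real.sqrt_sq (by positivity)
  constructor
  · have := norm_sub_norm_le a (x i)
    have h2 : ‖a - x i‖ = ‖x i - a‖ := norm_sub_rev _ _
    nlinarith
  · have := norm_add_le (x i - a) a
    simp only [sub_add_cancel] at this
    nlinarith
end
end

section
/- Let P := {x ∈ ℝ^m : ⟨u, x⟩ ≤ ε, ⟨v, x⟩ ≤ 0} where u, v are nonzero and ε ≥ 0, and let C ⊆ P be closed convex with δ_P*(z⁰) = δ_C*(z⁰) for a given z⁰. Then δ_P*(w) ≥ δ_C*(w) for all w, and for any point y, the Dykstra-type decrease inequality holds: ½‖y − z⁰‖² + δ_C*(z⁰) ≥ ½‖y − z⁺‖² + δ_C*(z⁺) + ½‖x⁰ − x̃⁺‖², where z̃⁺ = argmin_z ½‖y − z‖² + δ_P*(z), x̃⁺ = y − z̃⁺, x⁰ = y − z⁰, and z⁺ = argmin_z ½‖y − z‖² + δ_C*(z). -/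
noncomputable section

/-- The support function of a set `S ⊆ ℝ^m`, valued in `EReal`. -/
def supp {m : ℕ} (S : Set (EuclideanSpace ℝ (Fin m))) (w : EuclideanSpace ℝ (Fin m)) :
    EReal :=
  ⨆ x ∈ S, ((inner ℝ w x : ℝ) : EReal)


private lemma arith_aux (t B A ip nd ny : ℝ) (ht0 : 0 < t)
    (h : 1/2 * ny + B ≤ 1/2 * (ny - 2 * (t * ip) + t^2 * nd) + ((1 - t) * B + t * A)) :
    B - (A - ip) ≤ t * (1/2 * nd) := by
  have h4 : t * (B - A + ip) ≤ t * (t * (1/2 * nd)) := by nlinarith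
  have h5 := (mul_le_mul_iff_right₀ ht0).mp h4
  linarith

/-- Dykstra-type decrease inequality for an outer polyhedral approximation
`P = {x : ⟨u,x⟩ ≤ ε, ⟨v,x⟩ ≤ 0} ⊇ C` with `δ_P*(z⁰) = δ_C*(z⁰)`. -/
theorem stmt12 {m : ℕ} (u v : EuclideanSpace ℝ (Fin m)) (hu : u ≠ 0) (hv : v ≠ 0)
    (ε : ℝ) (hε : 0 ≤ ε)
    (P C : Set (EuclideanSpace ℝ (Fin m)))
    (hP : P = {x | (inner ℝ u x : ℝ) ≤ ε ∧ (inner ℝ v x : ℝ) ≤ 0})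
    (hCP : C ⊆ P) (hCc : IsClosed C) (hCv : Convex ℝ C) (hCne : C.Nonempty)
    (y z0 zt zplus x0 xt : EuclideanSpace ℝ (Fin m))
    (hx0 : x0 = y - z0) (hxt : xt = y - zt)
    (hz0 : supp P z0 = supp C z0)
    (hztmin : ∀ w, ((1/2 * ‖y - zt‖^2 : ℝ) : EReal) + supp P zt ≤
        ((1/2 * ‖y - w‖^2 : ℝ) : EReal) + supp P w)
    (hzpmin : ∀ w, ((1/2 * ‖y - zplus‖^2 : ℝ) : EReal) + supp C zplus ≤
        ((1/2 * ‖y - w‖^2 : ℝ) : EReal) + supp C w) :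
    (∀ w, supp C w ≤ supp P w) ∧
    ((1/2 * ‖y - z0‖^2 : ℝ) : EReal) + supp C z0 ≥
      ((1/2 * ‖y - zplus‖^2 : ℝ) : EReal) + supp C zplus +
        ((1/2 * ‖x0 - xt‖^2 : ℝ) : EReal) := by
  classical
  have hmono : ∀ w, supp C w ≤ supp P w := fun w => iSup_le_iSup_of_subset hCP
  refine ⟨hmono, ?_⟩
  obtain ⟨c, hc⟩ := hCne
  have hle_suppC : ∀ w, ((inner ℝ w c : ℝ) : EReal) ≤ supp C w := fun w =>
    le_iSup₂ (f := fun x (_ : x ∈ C) => ((inner ℝ w x : ℝ) : EReal)) c hc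
  have hne_botC : ∀ w, supp C w ≠ ⊥ := by
    intro w h
    exact absurd (h ▸ hle_suppC w) (by simp)
  by_cases htop : supp C z0 = ⊤
  · rw [htop, EReal.add_top_of_ne_bot (EReal.coe_ne_bot _)]
    exact le_top
  -- A := real value of supp C z0 = supp P z0
  set A : ℝ := (supp C z0).toReal with hAdef
  have hA : supp C z0 = (A : ℝ) := (EReal.coe_toReal htop (hne_botC z0)).symm
  have hPA : supp P z0 = (A : ℝ) := hz0.trans hA
  -- supp P zt is finite, value B
  have hzt_le : ((1/2 * ‖y - zt‖^2 : ℝ) : EReal) + supp P zt ≤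
      ((1/2 * ‖y - z0‖^2 + A : ℝ) : EReal) := by
    have := hztmin z0
    rw [hPA] at this
    exact this.trans_eq (by rw [EReal.coe_add])
  have hnt : supp P zt ≠ ⊤ := by
    intro h
    rw [h, EReal.add_top_of_ne_bot (EReal.coe_ne_bot _)] at hzt_le
    exact absurd hzt_le (not_le.mpr (EReal.coe_lt_top _))
  have hnb : supp P zt ≠ ⊥ := fun h =>
    hne_botC zt (le_bot_iff.mp (h ▸ hmono zt))
  set B : ℝ := (supp P zt).toReal with hBdef
  have hB : supp P zt = (B : ℝ) := (EReal.coe_toReal hnt hnb).symm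
  -- pointwise bounds on P
  have hptB : ∀ p ∈ P, (inner ℝ zt p : ℝ) ≤ B := by
    intro p hp
    have : ((inner ℝ zt p : ℝ) : EReal) ≤ (B : ℝ) :=
      (le_iSup₂ (f := fun x (_ : x ∈ P) => ((inner ℝ zt x : ℝ) : EReal)) p hp).trans_eq hB
    exact_mod_cast this
  have hptA : ∀ p ∈ P, (inner ℝ z0 p : ℝ) ≤ A := by
    intro p hp
    have : ((inner ℝ z0 p : ℝ) : EReal) ≤ (A : ℝ) :=
      (le_iSup₂ (f := fun x (_ : x ∈ P) => ((inner ℝ z0 x : ℝ) : EReal)) p hp).trans_eq hPA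
    exact_mod_cast this
  set d : EuclideanSpace ℝ (Fin m) := z0 - zt with hd
  -- strong convexity scalar inequality
  have hkey : B ≤ A - (inner ℝ (y - zt) d : ℝ) := by
    by_contra hcon
    push_neg at hcon
    set η : ℝ := B - (A - (inner ℝ (y - zt) d : ℝ)) with hηdef
    have hη : 0 < η := by simp only [hηdef]; linarith
    set t : ℝ := min 1 (η / (1/2 * ‖d‖^2 + 1)) with htdef
    have hden : (0:ℝ) < 1/2 * ‖d‖^2 + 1 := by positivity
    have ht0 : 0 < t := lt_min one_pos (div_pos hη hden)
    have ht1 : t ≤ 1 := min_le_left _ _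
    have htη : t * (1/2 * ‖d‖^2) < η := by
      have h1 : t ≤ η / (1/2 * ‖d‖^2 + 1) := min_le_right _ _
      have h2 : t * (1/2 * ‖d‖^2 + 1) ≤ η := by
        rw [← le_div_iff₀ hden]; exact h1
      linarith
    set w : EuclideanSpace ℝ (Fin m) := (1 - t) • zt + t • z0 with hwdef
    have hsuppw : supp P w ≤ (((1 - t) * B + t * A : ℝ) : EReal) := by
      refine iSup₂_le fun p hp => ?_
      have h1 := hptB p hp
      have h2 := hptA p hp
      have hinner : (inner ℝ w p : ℝ) = (1 - t) * (inner ℝ zt p : ℝ) + t * (inner ℝ z0 p : ℝ) := by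
        rw [hwdef, inner_add_left, real_inner_smul_left, real_inner_smul_left]
      rw [EReal.coe_le_coe_iff, hinner]
      nlinarith
    have hmin := hztmin w
    rw [hB] at hmin
    have hmin2 : ((1/2 * ‖y - zt‖^2 + B : ℝ) : EReal) ≤
        ((1/2 * ‖y - w‖^2 + ((1 - t) * B + t * A) : ℝ) : EReal) := by
      rw [EReal.coe_add, EReal.coe_add]
      exact hmin.trans (add_le_add_right hsuppw _)
    rw [EReal.coe_le_coe_iff] at hmin2
    -- expand the norm
    have hyw : y - w = (y - zt) - t • d := by
      rw [hwdef, hd]; module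
    have hnorm : ‖y - w‖^2 = ‖y - zt‖^2 - 2 * (t * (inner ℝ (y - zt) d : ℝ)) + t^2 * ‖d‖^2 := by
      rw [hyw, norm_sub_sq_real, real_inner_smul_right, norm_smul, Real.norm_eq_abs,
        mul_pow, sq_abs]
    rw [hnorm] at hmin2
    have hfin : B - (A - (inner ℝ (y - zt) d : ℝ)) ≤ t * (1/2 * ‖d‖^2) :=
      arith_aux t B A _ _ _ ht0 hmin2
    have : η ≤ t * (1/2 * ‖d‖^2) := hηdef ▸ hfin
    linarith
  -- main real inequality
  have hz0zt : y - z0 = (y - zt) - d := by rw [hd]; abel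
  have hnorm0 : ‖y - z0‖^2 = ‖y - zt‖^2 - 2 * (inner ℝ (y - zt) d : ℝ) + ‖d‖^2 := by
    rw [hz0zt, norm_sub_sq_real]
  have hmain : 1/2 * ‖y - zt‖^2 + B + 1/2 * ‖d‖^2 ≤ 1/2 * ‖y - z0‖^2 + A := by
    rw [hnorm0]; linarith
  -- x0 - xt = zt - z0 = -d
  have hx : ‖x0 - xt‖ = ‖d‖ := by
    rw [hx0, hxt, hd]
    rw [show y - z0 - (y - zt) = -(z0 - zt) by module, norm_neg]
  -- assemble in EReal
  rw [hA, ← EReal.coe_add, hx, ge_iff_le]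
  calc ((1/2 * ‖y - zplus‖^2 : ℝ) : EReal) + supp C zplus + ((1/2 * ‖d‖^2 : ℝ) : EReal)
      ≤ (((1/2 * ‖y - zt‖^2 : ℝ) : EReal) + supp C zt) + ((1/2 * ‖d‖^2 : ℝ) : EReal) := by
        exact add_le_add_left (hzpmin zt) _
    _ ≤ (((1/2 * ‖y - zt‖^2 : ℝ) : EReal) + ((B : ℝ) : EReal)) + ((1/2 * ‖d‖^2 : ℝ) : EReal) := by
        exact add_le_add_left (add_le_add_right ((hmono zt).trans_eq hB) _) _
    _ = ((1/2 * ‖y - zt‖^2 + B + 1/2 * ‖d‖^2 : ℝ) : EReal) := by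
        rw [EReal.coe_add, EReal.coe_add]
    _ ≤ ((1/2 * ‖y - z0‖^2 + A : ℝ) : EReal) := EReal.coe_le_coe_iff.mpr hmain
end
end

section
/- Let d, x, a ∈ ℝ^m with d = P_{Z^⊥} a for a subspace Z, ‖P_Z a‖² ≤ θ_Z ‖a‖², and ‖x − a‖ ≤ sqrt(θ_D|V|/(1−θ_D)) ‖a‖, with ‖x‖ ≤ (1 + sqrt(θ_D|V|/(1−θ_D)))‖a‖. Then ⟨d, x⟩ ≥ ‖d‖ · c · ‖x‖ where c = (sqrt(1−θ_Z) − sqrt(θ_D|V|/(1−θ_D))) / (1 + sqrt(θ_D|V|/(1−θ_D))), provided c > 0. -/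
noncomputable section

/-- Lower bound `⟨d, x⟩ ≥ ‖d‖ c ‖x‖` for `d = P_{Z^⊥} a` when `‖P_Z a‖² ≤ θ_Z‖a‖²` and
`x` is close to `a`. -/
theorem stmt15 {m : ℕ} (Z : Submodule ℝ (EuclideanSpace ℝ (Fin m)))
    (θZ θD : ℝ) (hθZ : θZ ∈ Set.Ioo (0:ℝ) 1) (hθD : θD ∈ Set.Ioo (0:ℝ) 1)
    (nV : ℕ) (hV : 1 ≤ nV)
    (a x d : EuclideanSpace ℝ (Fin m))
    (hd : d = (Submodule.orthogonalProjection Zᗮ a : EuclideanSpace ℝ (Fin m)))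
    (hZ : ‖(Submodule.orthogonalProjection Z a : EuclideanSpace ℝ (Fin m))‖^2 ≤ θZ * ‖a‖^2)
    (hxa : ‖x - a‖ ≤ Real.sqrt (θD * nV / (1 - θD)) * ‖a‖)
    (hx : ‖x‖ ≤ (1 + Real.sqrt (θD * nV / (1 - θD))) * ‖a‖)
    (c : ℝ)
    (hc : c = (Real.sqrt (1 - θZ) - Real.sqrt (θD * nV / (1 - θD))) /
        (1 + Real.sqrt (θD * nV / (1 - θD))))
    (hcpos : 0 < c) :
    (inner ℝ d x : ℝ) ≥ ‖d‖ * c * ‖x‖ := by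
  set s := Real.sqrt (θD * nV / (1 - θD)) with hs
  have hs0 : 0 ≤ s := Real.sqrt_nonneg _
  have h1s : (0:ℝ) < 1 + s := by linarith
  -- d ∈ Zᗮ
  have hmem : d ∈ Zᗮ := hd ▸ (Submodule.orthogonalProjection Zᗮ a).2
  have hperp : (inner ℝ d (a - d) : ℝ) = 0 := by
    refine Submodule.inner_right_of_mem_orthogonal hmem ?_
    rw [hd]
    exact Submodule.sub_starProjection_mem_orthogonal (K := Zᗮ) a
  have hda : (inner ℝ d a : ℝ) = ‖d‖^2 := by
    have := hperp
    rw [inner_sub_right, sub_eq_zero] at this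
    rw [this, real_inner_self_eq_norm_sq]
  -- ‖d‖² ≥ (1-θZ)‖a‖²
  have hpyth : ‖a‖^2 = ‖(Submodule.orthogonalProjection Z a : EuclideanSpace ℝ (Fin m))‖^2 +
      ‖(Submodule.orthogonalProjection Zᗮ a : EuclideanSpace ℝ (Fin m))‖^2 :=
    Submodule.norm_sq_eq_add_norm_sq_projection a Z
  have hd2 : (1 - θZ) * ‖a‖^2 ≤ ‖d‖^2 := by
    rw [hd]; nlinarith
  have hdn : Real.sqrt (1 - θZ) * ‖a‖ ≤ ‖d‖ := by
    have h1 : (Real.sqrt (1 - θZ) * ‖a‖)^2 ≤ ‖d‖^2 := by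
      rw [mul_pow, Real.sq_sqrt (by linarith [hθZ.2.le] : (0:ℝ) ≤ 1 - θZ)]
      exact hd2
    nlinarith [norm_nonneg d, mul_nonneg (Real.sqrt_nonneg (1 - θZ)) (norm_nonneg a)]
  -- inner ℝ d (x - a) ≥ -‖d‖‖x-a‖
  have hcs : -(‖d‖ * ‖x - a‖) ≤ (inner ℝ d (x - a) : ℝ) := by
    have := abs_real_inner_le_norm d (x - a)
    cases abs_cases (inner ℝ d (x - a) : ℝ) with
    | inl h => linarith [h.1.symm ▸ this, this]
    | inr h => linarith
  have hsplit : (inner ℝ d x : ℝ) = ‖d‖^2 + inner ℝ d (x - a) := by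
    rw [inner_sub_right, hda]; ring
  -- c * (1 + s) = √(1-θZ) - s
  have hcmul : c * (1 + s) = Real.sqrt (1 - θZ) - s := by
    rw [hc]; field_simp
  have hdnn : (0:ℝ) ≤ ‖d‖ := norm_nonneg d
  have hxan : (0:ℝ) ≤ ‖x - a‖ := norm_nonneg _
  have key : (inner ℝ d x : ℝ) ≥ ‖d‖ * (Real.sqrt (1 - θZ) - s) * ‖a‖ := by
    rw [hsplit]
    have h2 : ‖d‖ * ‖x - a‖ ≤ ‖d‖ * (s * ‖a‖) := by
      exact mul_le_mul_of_nonneg_left hxa hdnn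
    nlinarith [mul_le_mul_of_nonneg_left hdn hdnn]
  have hfin : ‖d‖ * c * ‖x‖ ≤ ‖d‖ * (Real.sqrt (1 - θZ) - s) * ‖a‖ := by
    have : ‖d‖ * c * ‖x‖ ≤ ‖d‖ * c * ((1 + s) * ‖a‖) := by
      exact mul_le_mul_of_nonneg_left hx (by positivity)
    calc ‖d‖ * c * ‖x‖ ≤ ‖d‖ * c * ((1 + s) * ‖a‖) := this
      _ = ‖d‖ * (c * (1 + s)) * ‖a‖ := by ring
      _ = ‖d‖ * (Real.sqrt (1 - θZ) - s) * ‖a‖ := by rw [hcmul]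
  linarith
end
end
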